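/- Let p be a prime, n ≥ 1, and A an abelian group with p^n·a = 0 for all a ∈ A. Let {m_i}_{i∈I} be a family of elements of the free abelian group M = ⊕_{j∈J} ℤ·x_j whose images in M/pM are linearly independent over ℤ/p. Then for any family {a_i}_{i∈I} in A there exists a group homomorphism f : M → A with f(m_i) = a_i for all i. -/

import Mathlib

/-- Reduction modulo `q` of an element of the free abelian group `J →₀ ℤ`. -/
noncomputable def modRed (q : ℕ) {J : Type*} (v : J →₀ ℤ) : J →₀ ZMod q :=
  Finsupp.mapRange (Int.cast : ℤ → ZMod q) (by simp) v

/-- Non-reducible wrapper for the `ZMod p`-module structure. -/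
def zmodMod {p : ℕ} {A : Type*} [AddCommGroup A] (h : ∀ a : A, p • a = 0) :
    Module (ZMod p) A :=
  AddCommGroup.zmodModule h

/-- `modRed` as an additive monoid hom. -/
noncomputable def modRedHom (q : ℕ) (J : Type*) : (J →₀ ℤ) →+ (J →₀ ZMod q) :=
  Finsupp.mapRange.addMonoidHom (Int.castAddHom (ZMod q))

lemma modRedHom_apply (q : ℕ) {J : Type*} (v : J →₀ ℤ) :
    modRedHom q J v = modRed q v := rfl

/-- The base case: exponent `p`. -/
theorem base_case {p : ℕ} (hp : p.Prime)
    {A : Type*} [AddCommGroup A] (hA : ∀ a : A, p • a = 0)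
    {I J : Type*} (m : I → (J →₀ ℤ))
    (hli : LinearIndependent (ZMod p) (fun i => modRed p (m i)))
    (a : I → A) :
    ∃ f : (J →₀ ℤ) →+ A, ∀ i, f (m i) = a i := by
  haveI := Fact.mk hp
  letI : Module (ZMod p) A := zmodMod hA
  set v : I → (J →₀ ZMod p) := fun i => modRed p (m i) with hv
  let b : Module.Basis I (ZMod p) (Submodule.span (ZMod p) (Set.range v)) := Module.Basis.span hli
  let g₀ : (Submodule.span (ZMod p) (Set.range v)) →ₗ[ZMod p] A := b.constr (ZMod p) a
  obtain ⟨g, hg⟩ := LinearMap.exists_extend g₀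
  refine ⟨g.toAddMonoidHom.comp (modRedHom p J), fun i => ?_⟩
  have hvi : v i ∈ Submodule.span (ZMod p) (Set.range v) :=
    Submodule.subset_span ⟨i, rfl⟩
  have h1 : g (v i) = g₀ ⟨v i, hvi⟩ := by
    have := LinearMap.congr_fun hg ⟨v i, hvi⟩
    simpa using this
  have h2 : (⟨v i, hvi⟩ : Submodule.span (ZMod p) (Set.range v)) = b i := by
    apply Subtype.ext
    simp [b, Module.Basis.span_apply]
  show g (modRed p (m i)) = a i
  have : g (v i) = a i := by rw [h1, h2]; simp [g₀, Module.Basis.constr_basis]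
  simpa [hv] using this

/-- Every p-nonsingular system of equations over an abelian p-group of
bounded period p^n is solvable in the group itself. -/
theorem p_nonsingular_solvable_exponent_p_pow {p : ℕ} (hp : p.Prime)
    (n : ℕ) (hn : 1 ≤ n)
    {A : Type*} [AddCommGroup A] (hA : ∀ a : A, p ^ n • a = 0)
    {I J : Type*} (m : I → (J →₀ ℤ))
    (hli : LinearIndependent (ZMod p) (fun i => modRed p (m i)))
    (a : I → A) :
    ∃ f : (J →₀ ℤ) →+ A, ∀ i, f (m i) = a i := by
  induction n, hn using Nat.le_induction generalizing A with
  | base =>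
    exact base_case hp (by simpa using hA) m hli a
  | succ n hn ih =>
    -- the subgroup pA
    let φ : A →+ A := AddMonoidHom.mk' (fun x => p • x) (fun x y => smul_add p x y)
    let H : AddSubgroup A := φ.range
    let Q := A ⧸ H
    have hQ : ∀ q : Q, p • q = 0 := by
      intro q
      induction q using QuotientAddGroup.induction_on with
      | H x =>
        have : ((p • x : A) : Q) = 0 := by
          rw [QuotientAddGroup.eq_zero_iff]
          exact ⟨x, rfl⟩
        simpa using this
    obtain ⟨g, hg⟩ := base_case hp hQ m hli (fun i => ((a i : A) : Q))
    -- lift g to f₀ : (J →₀ ℤ) →+ A using freeness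
    choose c hc using fun j => QuotientAddGroup.mk_surjective (g (Finsupp.single j 1))
    let f₀ : (J →₀ ℤ) →+ A := Finsupp.liftAddHom (fun j => zmultiplesHom A (c j))
    have hf₀ : ∀ w : (J →₀ ℤ), ((f₀ w : A) : Q) = g w := by
      intro w
      have : (QuotientAddGroup.mk' H).comp f₀ = g := by
        apply Finsupp.addHom_ext
        intro j k
        have h1 : f₀ (Finsupp.single j k) = k • c j := by
          simp [f₀, Finsupp.liftAddHom_apply_single, zmultiplesHom]
        have h2 : g (Finsupp.single j k) = k • g (Finsupp.single j 1) := by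
          have hs : (Finsupp.single j k : J →₀ ℤ) = k • Finsupp.single j 1 := by
            simp [Finsupp.smul_single]
          rw [hs, AddMonoidHom.map_zsmul]
        simp only [AddMonoidHom.coe_comp, Function.comp_apply, QuotientAddGroup.coe_mk', h1, h2,
          ← hc j]
        rfl
      exact DFunLike.congr_fun this w
    -- the defect lies in H
    have hd : ∀ i, f₀ (m i) - a i ∈ H := by
      intro i
      rw [← QuotientAddGroup.eq_zero_iff]
      have : ((f₀ (m i) - a i : A) : Q) = ((f₀ (m i) : A) : Q) - ((a i : A) : Q) := rfl
      rw [this, hf₀, hg, sub_self]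
    -- H has exponent p^n
    have hH : ∀ x : H, p ^ n • x = 0 := by
      rintro ⟨x, b, rfl⟩
      apply Subtype.ext
      have : φ b = p • b := rfl
      show p ^ n • (φ b) = 0
      rw [this, ← smul_assoc, smul_eq_mul, ← pow_succ]
      exact hA b
    obtain ⟨h, hh⟩ := ih hH (fun i => ⟨f₀ (m i) - a i, hd i⟩)
    refine ⟨f₀ - H.subtype.comp h, fun i => ?_⟩
    have : ((h (m i) : H) : A) = f₀ (m i) - a i := by rw [hh i]
    simp only [AddMonoidHom.sub_apply, AddMonoidHom.coe_comp, Function.comp_apply,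
      AddSubgroup.coe_subtype, this]
    abel
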